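/- arXiv:2511.06812 — 2 statements merged into one kernel-verified Lean document; each statement's English description precedes it below -/
import Mathlib

section
/- Let P(·|x,a,μ) be a family of probability transition kernels on a measurable state space X. Suppose there exists α > 0 such that for all states x, y, all measures μ, ν, and a fixed policy π, the total variation bound ‖P(·|x,π(x),μ) − P(·|y,π(y),ν)‖₁ ≤ 2(1−α) holds, and there exists λ ∈ [0,α) such that d_TV(P(·|x,π(x),μ), P(·|x,π(x),ν)) ≤ λ · d_TV(μ, ν) for all x, μ, ν. Then the map μ ↦ μP^{π,μ}, defined by (μP^{π,μ})(B) = ∫ P(B|x,π(x),μ) dμ(x), satisfies ‖μP^{π,μ} − νP^{π,ν}‖₁ ≤ (1−α+λ)‖μ−ν‖₁ for all probability measures μ, ν. -/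
open Finset

/-- Dobrushin estimate: if all rows of `Q` are pairwise close in ℓ¹ (bound `c`),
then for any `f` with zero total sum, `‖f Q‖₁ ≤ (c/2) ‖f‖₁`. -/
lemma dob_aux {X : Type*} [Fintype X] (Q : X → X → ℝ) (f : X → ℝ)
    (c : ℝ) (hQ : ∀ x y, ∑ x', |Q x x' - Q y x'| ≤ c)
    (hf : ∑ x, f x = 0) :
    ∑ x', |∑ x, f x * Q x x'| ≤ (c/2) * ∑ x, |f x| := by
  classical
  set p : X → ℝ := fun x => max (f x) 0 with hp
  set n : X → ℝ := fun x => max (-f x) 0 with hn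
  have hp0 : ∀ x, 0 ≤ p x := fun x => le_max_right _ _
  have hn0 : ∀ x, 0 ≤ n x := fun x => le_max_right _ _
  have hpn : ∀ x, p x - n x = f x := fun x => max_zero_sub_max_neg_zero_eq_self (f x)
  have habs : ∀ x, p x + n x = |f x| := fun x => max_zero_add_max_neg_zero_eq_abs_self (f x)
  set s : ℝ := ∑ x, p x with hs
  have hsn : ∑ x, n x = s := by
    have h1 : ∑ x, (p x - n x) = 0 := by simp_rw [hpn]; exact hf
    rw [Finset.sum_sub_distrib] at h1
    linarith
  have hsum_abs : ∑ x, |f x| = 2 * s := by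
    simp_rw [← habs]
    rw [Finset.sum_add_distrib, hsn, ← hs]
    ring
  have hs0 : (0:ℝ) ≤ s := Finset.sum_nonneg (fun x _ => hp0 x)
  rcases eq_or_lt_of_le hs0 with h0 | hspos
  · -- s = 0 : then f = 0
    have hz : ∀ x, f x = 0 := by
      intro x
      have hpz : p x = 0 :=
        (Finset.sum_eq_zero_iff_of_nonneg (fun x _ => hp0 x)).mp h0.symm x (mem_univ x)
      have hnz : n x = 0 :=
        (Finset.sum_eq_zero_iff_of_nonneg (fun x _ => hn0 x)).mp (by rw [hsn, ← h0]) x (mem_univ x)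
      rw [← hpn x, hpz, hnz]; ring
    simp [hz]
  · have hsne : s ≠ 0 := ne_of_gt hspos
    have hne : Nonempty X := by
      by_contra h
      rw [not_nonempty_iff] at h
      exact hsne (by rw [hs]; exact Finset.sum_of_isEmpty _)
    have hc0 : 0 ≤ c := by
      have := hQ (Classical.arbitrary X) (Classical.arbitrary X)
      simpa using this
    -- key identity
    have key : ∀ x', ∑ x, f x * Q x x'
        = s⁻¹ * ∑ x, ∑ y, p x * n y * (Q x x' - Q y x') := by
      intro x'
      have e1 : ∑ x, ∑ y, p x * n y * (Q x x' - Q y x')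
          = (∑ x, p x * Q x x') * (∑ y, n y) - (∑ x, p x) * (∑ y, n y * Q y x') := by
        rw [Finset.sum_mul_sum, Finset.sum_mul_sum, ← Finset.sum_sub_distrib]
        congr 1; ext x
        rw [← Finset.sum_sub_distrib]
        congr 1; ext y
        ring
      rw [e1, hsn, ← hs]
      have e2 : ∑ x, f x * Q x x' = ∑ x, p x * Q x x' - ∑ x, n x * Q x x' := by
        rw [← Finset.sum_sub_distrib]
        congr 1; ext x
        rw [← hpn x]; ring
      rw [e2]
      field_simp
    calc ∑ x', |∑ x, f x * Q x x'|
        ≤ ∑ x', s⁻¹ * ∑ x, ∑ y, p x * n y * |Q x x' - Q y x'| := by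
          apply Finset.sum_le_sum
          intro x' _
          rw [key x', abs_mul, abs_of_nonneg (inv_nonneg.mpr hs0)]
          apply mul_le_mul_of_nonneg_left _ (inv_nonneg.mpr hs0)
          refine (Finset.abs_sum_le_sum_abs _ _).trans ?_
          apply Finset.sum_le_sum
          intro x _
          refine (Finset.abs_sum_le_sum_abs _ _).trans ?_
          apply Finset.sum_le_sum
          intro y _
          rw [abs_mul, abs_of_nonneg (mul_nonneg (hp0 x) (hn0 y))]
      _ = s⁻¹ * ∑ x, ∑ y, p x * n y * ∑ x', |Q x x' - Q y x'| := by
          rw [← Finset.mul_sum]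
          congr 1
          rw [Finset.sum_comm]
          congr 1; ext x
          rw [Finset.sum_comm]
          congr 1; ext y
          rw [Finset.mul_sum]
      _ ≤ s⁻¹ * ∑ x, ∑ y, p x * n y * c := by
          apply mul_le_mul_of_nonneg_left _ (inv_nonneg.mpr hs0)
          apply Finset.sum_le_sum; intro x _
          apply Finset.sum_le_sum; intro y _
          exact mul_le_mul_of_nonneg_left (hQ x y) (mul_nonneg (hp0 x) (hn0 y))
      _ = (c/2) * ∑ x, |f x| := by
          have e3 : ∑ x, ∑ y, p x * n y * c = s * s * c := by
            simp_rw [mul_assoc, ← Finset.mul_sum, ← Finset.sum_mul, ← hs]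
            rw [hsn]
          rw [e3, hsum_abs]
          field_simp

/-- contraction estimate for the mean-field transition map.
State space `X` and action space `A` are finite; probability measures on `X` are
represented as nonnegative functions summing to one, with total variation norm
`‖μ − ν‖₁ = ∑ x |μ x − ν x|` and `d_TV = ½ ‖·‖₁`. -/
theorem mean_field_kernel_contraction
    {X A : Type*} [Fintype X] [Fintype A]
    (P : X → A → (X → ℝ) → X → ℝ)   -- transition density P(x'|x,a,μ)
    (π : X → A)                      -- fixed policy
    (hP_prob : ∀ x a μ, (∀ x', 0 ≤ P x a μ x') ∧ ∑ x', P x a μ x' = 1)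
    (α lam : ℝ) (hα : 0 < α) (hlam0 : 0 ≤ lam) (hlamα : lam < α)
    (hDob : ∀ x y : X, ∀ μ ν : X → ℝ,
      ∑ x', |P x (π x) μ x' - P y (π y) ν x'| ≤ 2 * (1 - α))
    (hLip : ∀ x : X, ∀ μ ν : X → ℝ,
      (1/2) * ∑ x', |P x (π x) μ x' - P x (π x) ν x'|
        ≤ lam * ((1/2) * ∑ x', |μ x' - ν x'|)) :
    ∀ μ ν : X → ℝ,
      ((∀ x, 0 ≤ μ x) ∧ ∑ x, μ x = 1) →
      ((∀ x, 0 ≤ ν x) ∧ ∑ x, ν x = 1) →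
      ∑ x', |(∑ x, μ x * P x (π x) μ x') - (∑ x, ν x * P x (π x) ν x')|
        ≤ (1 - α + lam) * ∑ x, |μ x - ν x| := by
  intro μ ν hμ hν
  classical
  set Q : X → X → ℝ := fun x => P x (π x) μ with hQdef
  -- split the difference
  have hsplit : ∀ x', (∑ x, μ x * P x (π x) μ x') - (∑ x, ν x * P x (π x) ν x')
      = (∑ x, (μ x - ν x) * Q x x') + ∑ x, ν x * (P x (π x) μ x' - P x (π x) ν x') := by
    intro x'
    rw [← Finset.sum_add_distrib, ← Finset.sum_sub_distrib]
    congr 1; ext x; ring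
  have hf0 : ∑ x, (μ x - ν x) = 0 := by
    rw [Finset.sum_sub_distrib, hμ.2, hν.2]; ring
  have hdob' : ∑ x', |∑ x, (μ x - ν x) * Q x x'|
      ≤ (1 - α) * ∑ x, |μ x - ν x| := by
    have := dob_aux Q (fun x => μ x - ν x) (2 * (1 - α))
      (fun x y => hDob x y μ μ) hf0
    calc ∑ x', |∑ x, (μ x - ν x) * Q x x'| ≤ (2 * (1 - α) / 2) * ∑ x, |μ x - ν x| := this
      _ = (1 - α) * ∑ x, |μ x - ν x| := by ring
  have hlip' : ∑ x', |∑ x, ν x * (P x (π x) μ x' - P x (π x) ν x')|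
      ≤ lam * ∑ x, |μ x - ν x| := by
    calc ∑ x', |∑ x, ν x * (P x (π x) μ x' - P x (π x) ν x')|
        ≤ ∑ x', ∑ x, ν x * |P x (π x) μ x' - P x (π x) ν x'| := by
          apply Finset.sum_le_sum; intro x' _
          refine (Finset.abs_sum_le_sum_abs _ _).trans ?_
          apply Finset.sum_le_sum; intro x _
          rw [abs_mul, abs_of_nonneg (hν.1 x)]
      _ = ∑ x, ν x * ∑ x', |P x (π x) μ x' - P x (π x) ν x'| := by
          rw [Finset.sum_comm]
          congr 1; ext x
          rw [Finset.mul_sum]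
      _ ≤ ∑ x, ν x * (lam * ∑ x', |μ x' - ν x'|) := by
          apply Finset.sum_le_sum; intro x _
          apply mul_le_mul_of_nonneg_left _ (hν.1 x)
          have := hLip x μ ν
          linarith
      _ = lam * ∑ x, |μ x - ν x| := by
          rw [← Finset.sum_mul, hν.2]
          ring
  calc ∑ x', |(∑ x, μ x * P x (π x) μ x') - (∑ x, ν x * P x (π x) ν x')|
      ≤ ∑ x', (|∑ x, (μ x - ν x) * Q x x'|
          + |∑ x, ν x * (P x (π x) μ x' - P x (π x) ν x')|) := by
        apply Finset.sum_le_sum; intro x' _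
        rw [hsplit x']
        exact abs_add_le _ _
    _ = (∑ x', |∑ x, (μ x - ν x) * Q x x'|)
          + ∑ x', |∑ x, ν x * (P x (π x) μ x' - P x (π x) ν x')| := Finset.sum_add_distrib
    _ ≤ (1 - α) * ∑ x, |μ x - ν x| + lam * ∑ x, |μ x - ν x| := add_le_add hdob' hlip'
    _ = (1 - α + lam) * ∑ x, |μ x - ν x| := by ring
end

section
/- Let β > 0, σ > 0, c₁, c₂, c₃, c₄, c₅ ∈ ℝ with c₁ + c₃ > 0. Define Γ₂ = (−β + √(β² + 8(c₁+c₃)))/4, Γ₁ = −2Γ₂c₃c₄ / (Γ₂(β + 2Γ₂) − c₁c₂), and Γ₀ = (c₅m² + c₃c₄² + c₁c₂²m² + σ²Γ₂ − ½Γ₁²)/β where m = −Γ₁/(2Γ₂). Assume Γ₂(β + 2Γ₂) ≠ c₁c₂ and Γ₂ > 0. Then the function v(x) = Γ₂x² + Γ₁x + Γ₀ satisfies the stationary HJB equation β v(x) = min over a ∈ ℝ of [½a² + c₁(x − c₂m)² + c₃(x − c₄)² + c₅m² + a·v'(x) + ½σ²v''(x)], with the minimum attained at a = −v'(x) = −(2Γ₂x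 + Γ₁). -/
/-- the explicit quadratic `v(x) = Γ₂x² + Γ₁x + Γ₀` solves the
stationary HJB equation
`β v(x) = min_a [½a² + c₁(x−c₂m)² + c₃(x−c₄)² + c₅m² + a v'(x) + ½σ² v''(x)]`,
with the minimum attained at `a = −v'(x) = −(2Γ₂x + Γ₁)`. -/
theorem lq_mfg_hjb_verification
    (β σ c₁ c₂ c₃ c₄ c₅ : ℝ) (hβ : 0 < β) (hσ : 0 < σ) (hsum : 0 < c₁ + c₃) :
    let Γ₂ := (-β + Real.sqrt (β ^ 2 + 8 * (c₁ + c₃))) / 4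
    let Γ₁ := -(2 * Γ₂ * c₃ * c₄) / (Γ₂ * (β + 2 * Γ₂) - c₁ * c₂)
    let m := -Γ₁ / (2 * Γ₂)
    let Γ₀ := (c₅ * m ^ 2 + c₃ * c₄ ^ 2 + c₁ * c₂ ^ 2 * m ^ 2 + σ ^ 2 * Γ₂
                - (1/2) * Γ₁ ^ 2) / β
    let v : ℝ → ℝ := fun x => Γ₂ * x ^ 2 + Γ₁ * x + Γ₀
    let H : ℝ → ℝ → ℝ := fun x a =>
      (1/2) * a ^ 2 + c₁ * (x - c₂ * m) ^ 2 + c₃ * (x - c₄) ^ 2 + c₅ * m ^ 2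
        + a * (2 * Γ₂ * x + Γ₁) + (1/2) * σ ^ 2 * (2 * Γ₂)
    Γ₂ * (β + 2 * Γ₂) ≠ c₁ * c₂ → 0 < Γ₂ →
      ∀ x : ℝ,
        (∀ a : ℝ, H x (-(2 * Γ₂ * x + Γ₁)) ≤ H x a) ∧
        β * v x = H x (-(2 * Γ₂ * x + Γ₁)) := by
  intro Γ₂ Γ₁ m Γ₀ v H hne hΓ₂pos x
  have hΓ₂ne : Γ₂ ≠ 0 := ne_of_gt hΓ₂pos
  have hβne : β ≠ 0 := ne_of_gt hβ
  have hs : Real.sqrt (β ^ 2 + 8 * (c₁ + c₃)) ^ 2 = β ^ 2 + 8 * (c₁ + c₃) :=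
    Real.sq_sqrt (by nlinarith)
  have hq : 2 * Γ₂ ^ 2 + β * Γ₂ = c₁ + c₃ := by
    show 2 * ((-β + Real.sqrt (β ^ 2 + 8 * (c₁ + c₃))) / 4) ^ 2 +
      β * ((-β + Real.sqrt (β ^ 2 + 8 * (c₁ + c₃))) / 4) = c₁ + c₃
    nlinarith [hs]
  have hd : Γ₂ * (β + 2 * Γ₂) - c₁ * c₂ ≠ 0 := sub_ne_zero.mpr hne
  have h1 : Γ₁ * (Γ₂ * (β + 2 * Γ₂) - c₁ * c₂) = -(2 * Γ₂ * c₃ * c₄) :=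
    div_mul_cancel₀ _ hd
  have hm : 2 * Γ₂ * m = -Γ₁ := by
    show 2 * Γ₂ * (-Γ₁ / (2 * Γ₂)) = -Γ₁
    field_simp
  have h0 : β * Γ₀ = c₅ * m ^ 2 + c₃ * c₄ ^ 2 + c₁ * c₂ ^ 2 * m ^ 2 + σ ^ 2 * Γ₂
      - (1/2) * Γ₁ ^ 2 := by
    rw [mul_comm]
    exact div_mul_cancel₀ _ hβne
  constructor
  · intro a
    show (1/2) * (-(2 * Γ₂ * x + Γ₁)) ^ 2 + c₁ * (x - c₂ * m) ^ 2 + c₃ * (x - c₄) ^ 2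
        + c₅ * m ^ 2 + (-(2 * Γ₂ * x + Γ₁)) * (2 * Γ₂ * x + Γ₁) + (1/2) * σ ^ 2 * (2 * Γ₂)
      ≤ (1/2) * a ^ 2 + c₁ * (x - c₂ * m) ^ 2 + c₃ * (x - c₄) ^ 2 + c₅ * m ^ 2
        + a * (2 * Γ₂ * x + Γ₁) + (1/2) * σ ^ 2 * (2 * Γ₂)
    nlinarith [sq_nonneg (a + (2 * Γ₂ * x + Γ₁))]
  · show β * (Γ₂ * x ^ 2 + Γ₁ * x + Γ₀) =
      (1/2) * (-(2 * Γ₂ * x + Γ₁)) ^ 2 + c₁ * (x - c₂ * m) ^ 2 + c₃ * (x - c₄) ^ 2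
        + c₅ * m ^ 2 + (-(2 * Γ₂ * x + Γ₁)) * (2 * Γ₂ * x + Γ₁) + (1/2) * σ ^ 2 * (2 * Γ₂)
    have hmval : c₁ * (x - c₂ * m) ^ 2 = c₁ * x ^ 2 - 2 * c₁ * c₂ * m * x + c₁ * c₂ ^ 2 * m ^ 2 := by
      ring
    -- use linear_combination with the identities
    have key : Γ₂ * (β * Γ₁) = Γ₂ * (-2 * Γ₂ * Γ₁ - 2 * c₁ * c₂ * m - 2 * c₃ * c₄) := by
      linear_combination h1 + c₁ * c₂ * hm
    have hlin : β * Γ₁ = -2 * Γ₂ * Γ₁ - 2 * c₁ * c₂ * m - 2 * c₃ * c₄ :=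
      mul_left_cancel₀ hΓ₂ne key
    linear_combination x ^ 2 * hq + x * hlin + h0
end
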